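/- For all n ≥ 2, the sum over j from 0 to floor(n/2) of (-1)^j * binomial(n, 2j) * G_{2n-2j} equals 0, where G_{2k} are the Genocchi numbers of the first kind. -/

import Mathlib

/-- Genocchi numbers of the first kind: `genocchi n = G_{2n}`,
via `G_{2n} = (-1)^{n+1} 2 (4^n - 1) B_{2n}`. -/
noncomputable def genocchi (n : ℕ) : ℚ :=
  (-1) ^ (n + 1) * 2 * (4 ^ n - 1) * bernoulli (2 * n)

section PS

open PowerSeries Finset

lemma ps_key : (exp ℚ + 1) * rescale (2:ℚ) (bernoulliPowerSeries ℚ) = 2 * bernoulliPowerSeries ℚ := by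
  have h := bernoulliPowerSeries_mul_exp_sub_one ℚ
  have h2 : rescale (2:ℚ) (bernoulliPowerSeries ℚ) * (exp ℚ ^ 2 - 1) = 2 * X := by
    have h3 := congrArg (rescale (2:ℚ)) h
    rw [map_mul, map_sub, map_one, rescale_X] at h3
    rw [exp_pow_eq_rescale_exp]
    norm_num
    rw [h3, map_ofNat (C (R := ℚ)) 2]
  have hne : exp ℚ - 1 ≠ 0 := by
    intro hE
    have := congrArg (PowerSeries.coeff 1) hE
    simp [coeff_exp] at this
  apply mul_right_cancel₀ hne
  calc (exp ℚ + 1) * rescale (2:ℚ) (bernoulliPowerSeries ℚ) * (exp ℚ - 1)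
      = rescale (2:ℚ) (bernoulliPowerSeries ℚ) * (exp ℚ ^ 2 - 1) := by ring
    _ = 2 * X := h2
    _ = 2 * bernoulliPowerSeries ℚ * (exp ℚ - 1) := by rw [mul_assoc, h]

/-- `∑_{i ≤ k} C(k,i) 2^i B_i + 2^k B_k = 2 B_k`, i.e. the multiplication
theorem for Bernoulli numbers at 1/2. -/
lemma bernoulli_double (k : ℕ) :
    (∑ i ∈ Finset.range (k+1), (k.choose i : ℚ) * 2^i * bernoulli i) + 2^k * bernoulli k
      = 2 * bernoulli k := by
  have hk := ps_key
  rw [show (2 : ℚ⟦X⟧) = C (R := ℚ) 2 from (map_ofNat (C (R := ℚ)) 2).symm] at hk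
  have h := congrArg (PowerSeries.coeff k) hk
  simp only [add_mul, one_mul, map_add, PowerSeries.coeff_mul, PowerSeries.coeff_exp,
    coeff_rescale, bernoulliPowerSeries, coeff_mk, Finset.Nat.sum_antidiagonal_eq_sum_range_succ_mk,
    coeff_C, ite_mul, zero_mul, Algebra.algebraMap_self, RingHom.id_apply] at h
  rw [Finset.sum_ite_eq' (range k.succ) 0] at h
  simp only [mem_range, Nat.succ_pos, if_true, Nat.sub_zero] at h
  have h2 := congrArg (fun r => (k.factorial : ℚ) * r) h
  simp only [mul_add, Finset.mul_sum] at h2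
  have hfac : (k.factorial : ℚ) ≠ 0 := Nat.cast_ne_zero.mpr k.factorial_ne_zero
  have e1 : ∀ x ∈ range k.succ,
      (k.factorial : ℚ) * (1 / (x.factorial : ℚ) * (2 ^ (k - x) * (bernoulli (k - x) / ((k - x).factorial : ℚ))))
        = (k.choose x : ℚ) * 2 ^ (k - x) * bernoulli (k - x) := by
    intro x hx
    rw [mem_range, Nat.lt_succ_iff] at hx
    rw [Nat.cast_choose ℚ hx]
    have hx1 : (x.factorial : ℚ) ≠ 0 := Nat.cast_ne_zero.mpr x.factorial_ne_zero
    have hx2 : ((k - x).factorial : ℚ) ≠ 0 := Nat.cast_ne_zero.mpr (k - x).factorial_ne_zero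
    field_simp
  rw [Finset.sum_congr rfl e1] at h2
  have e2 : (k.factorial : ℚ) * (2 ^ k * (bernoulli k / (k.factorial : ℚ))) = 2 ^ k * bernoulli k := by
    field_simp
  have e3 : (k.factorial : ℚ) * (2 * (bernoulli k / (k.factorial : ℚ))) = 2 * bernoulli k := by
    field_simp
  rw [e2, e3] at h2
  rw [← h2]
  congr 1
  rw [← Finset.sum_range_reflect]
  refine Finset.sum_congr rfl fun i hi => ?_
  rw [mem_range, Nat.lt_succ_iff] at hi
  simp only [Nat.add_sub_cancel]
  rw [Nat.choose_symm hi]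

end PS

section Umbral

open Polynomial Finset

/-- The Bernoulli umbral functional: `X^k ↦ bernoulli k`. -/
noncomputable def LB : Polynomial ℚ →ₗ[ℚ] ℚ :=
  Polynomial.lsum fun k => LinearMap.toSpanSingleton ℚ ℚ (_root_.bernoulli k)

lemma LB_monomial (k : ℕ) (a : ℚ) : LB (monomial k a) = a * _root_.bernoulli k := by
  simp [LB, Polynomial.sum_monomial_index, LinearMap.toSpanSingleton_apply, smul_eq_mul]

lemma LB_C_mul_X_pow (a : ℚ) (k : ℕ) : LB (C a * X ^ k) = a * _root_.bernoulli k := by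
  rw [C_mul_X_pow_eq_monomial, LB_monomial]

lemma LB_linear_pow (b c : ℚ) (k : ℕ) :
    LB ((C b * X + C c) ^ k)
      = ∑ i ∈ range (k + 1), (k.choose i : ℚ) * b ^ i * c ^ (k - i) * _root_.bernoulli i := by
  rw [add_pow, map_sum]
  refine Finset.sum_congr rfl fun i hi => ?_
  have : (C b * X) ^ i * C c ^ (k - i) * ((k.choose i : ℕ) : ℚ[X])
      = C (b ^ i * c ^ (k - i) * (k.choose i : ℚ)) * X ^ i := by
    simp only [map_mul, map_pow, map_natCast]
    ring
  rw [this, LB_C_mul_X_pow]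
  ring

lemma LB_pow_no_const (b : ℚ) (k : ℕ) : LB ((C b * X) ^ k) = b ^ k * _root_.bernoulli k := by
  have h : (C b * X) ^ k = (C b * X + C 0) ^ k := by simp
  rw [h, LB_linear_pow, Finset.sum_range_succ]
  rw [Finset.sum_eq_zero, Nat.sub_self, pow_zero]
  · simp
  · intro i hi
    rw [mem_range] at hi
    rw [zero_pow (by omega : k - i ≠ 0)]
    ring

lemma LB_shift_pow (k : ℕ) :
    LB ((X + 1) ^ k) = _root_.bernoulli k + (if k = 1 then 1 else 0) := by
  have h : ((X : ℚ[X]) + 1) ^ k = (C 1 * X + C 1) ^ k := by simp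
  rw [h, LB_linear_pow]
  simp only [one_pow, mul_one]
  rw [Finset.sum_range_succ, _root_.sum_bernoulli]
  simp only [Nat.choose_self, Nat.cast_one, one_mul]
  ring

lemma LB_C_mul (a : ℚ) (q : ℚ[X]) : LB (C a * q) = a * LB q := by
  rw [← smul_eq_C_mul, map_smul, smul_eq_mul]

lemma LB_comp_shift (p : ℚ[X]) : LB (p.comp (X + 1)) = LB p + p.derivative.eval 0 := by
  induction p using Polynomial.induction_on' with
  | add p q hp hq => simp only [add_comp, map_add, derivative_add, eval_add, hp, hq]; ring
  | monomial k a =>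
      rw [monomial_comp, LB_C_mul, LB_shift_pow, LB_monomial,
        derivative_monomial, eval_monomial]
      rcases k with _ | _ | k
      · norm_num
      · norm_num; ring
      · rw [if_neg (by omega)]
        norm_num

lemma neg_one_pow_bernoulli (k : ℕ) :
    (-1:ℚ)^k * _root_.bernoulli k = _root_.bernoulli k + (if k = 1 then 1 else 0) := by
  rcases Nat.even_or_odd k with he | ho
  · have hk : k ≠ 1 := by rintro rfl; exact Nat.not_even_one he
    simp [he.neg_one_pow, hk]
  · rcases eq_or_ne k 1 with rfl | hk
    · norm_num [_root_.bernoulli_one]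
    · have hz : _root_.bernoulli k = 0 := by
        rw [bernoulli_eq_bernoulli'_of_ne_one hk]
        exact bernoulli'_eq_zero_of_odd ho (by rcases ho with ⟨m, rfl⟩; omega)
      simp [hz, hk]

lemma LB_comp_neg (p : ℚ[X]) : LB (p.comp (-X)) = LB (p.comp (X + 1)) := by
  induction p using Polynomial.induction_on' with
  | add p q hp hq => simp only [add_comp, map_add, hp, hq]
  | monomial k a =>
      have hneg : (-X : ℚ[X]) = C (-1) * X := by simp
      rw [monomial_comp, monomial_comp, LB_C_mul, LB_C_mul, hneg, LB_pow_no_const,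
        LB_shift_pow, neg_one_pow_bernoulli]

lemma LB_comp_two (p : ℚ[X]) :
    LB (p.comp (C 2 * X)) = 2 * LB p - LB (p.comp (C 2 * X + C 1)) := by
  induction p using Polynomial.induction_on' with
  | add p q hp hq => simp only [add_comp, map_add, hp, hq]; ring
  | monomial k a =>
      rw [monomial_comp, monomial_comp, LB_C_mul, LB_C_mul, LB_pow_no_const, LB_linear_pow,
        LB_monomial]
      have h := bernoulli_double k
      have : ∑ i ∈ range (k + 1), (k.choose i : ℚ) * 2 ^ i * 1 ^ (k - i) * _root_.bernoulli i
          = 2 * _root_.bernoulli k - 2 ^ k * _root_.bernoulli k := by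
        rw [← h]; simp
      rw [this]
      ring

/-- The polynomial `X^n (X+1)^n`. -/
noncomputable def AP (n : ℕ) : ℚ[X] := X ^ n * (X + 1) ^ n

lemma LA_comp (n : ℕ) (c : ℚ) :
    LB ((AP n).comp (C c * X))
      = ∑ i ∈ range (n + 1), (n.choose i : ℚ) * c ^ (n + i) * _root_.bernoulli (n + i) := by
  have h : (AP n).comp (C c * X) = (C c * X) ^ n * (C c * X + 1) ^ n := by
    simp [AP, mul_comp, pow_comp, add_comp, X_comp, one_comp]
  rw [h, add_pow, Finset.mul_sum, map_sum]
  refine Finset.sum_congr rfl fun i hi => ?_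
  have e : (C c * X) ^ n * ((C c * X) ^ i * (1:ℚ[X]) ^ (n - i) * ((n.choose i : ℕ) : ℚ[X]))
      = C (c ^ (n + i) * (n.choose i : ℚ)) * X ^ (n + i) := by
    simp only [one_pow, mul_one, mul_pow, map_mul, map_pow, C_eq_natCast]
    ring
  rw [e, LB_C_mul_X_pow]
  ring

lemma LB_AP_neg (n : ℕ) (hn : 2 ≤ n) : LB ((AP n).comp (-X)) = LB (AP n) := by
  rw [LB_comp_neg, LB_comp_shift]
  have h : (AP n).derivative.eval 0 = 0 := by
    have h1 : n ≠ 0 := by omega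
    have h2 : n - 1 ≠ 0 := by omega
    simp [AP, derivative_mul, derivative_pow, zero_pow h1, zero_pow h2]
  rw [h, add_zero]

lemma LB_AP_neg_two (n : ℕ) : LB ((AP n).comp (C (-2) * X))
    = 2 * LB ((AP n).comp (-X)) - LB ((AP n).comp (C 2 * X)) := by
  have e1 : (AP n).comp (C (-2) * X) = ((AP n).comp (-X)).comp (C 2 * X) := by
    rw [comp_assoc, neg_comp, X_comp, map_neg, neg_mul]
  have e2 : ((AP n).comp (-X)).comp (C 2 * X + C 1) = (AP n).comp (C 2 * X) := by
    rw [comp_assoc, neg_comp, X_comp]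
    simp only [AP, mul_comp, pow_comp, add_comp, X_comp, one_comp, map_one]
    rw [← mul_pow, ← mul_pow]
    congr 1
    ring
  rw [e1, LB_comp_two, e2]

lemma sum_S_eq (n : ℕ) (hn : 2 ≤ n) :
    ∑ i ∈ range (n + 1),
      (n.choose i : ℚ) * (2 ^ (n + i) + (-2:ℚ) ^ (n + i) - 1 - (-1:ℚ) ^ (n + i))
        * _root_.bernoulli (n + i) = 0 := by
  have k2 := LA_comp n 2
  have km2 := LA_comp n (-2)
  have k1 := LA_comp n 1
  have km1 := LA_comp n (-1)
  have hA1 : (AP n).comp (C (1:ℚ) * X) = AP n := by simp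
  have hAm1 : (AP n).comp (C (-1:ℚ) * X) = (AP n).comp (-X) := by norm_num
  have hneg := LB_AP_neg n hn
  have h2 := LB_AP_neg_two n
  rw [hA1] at k1
  rw [hAm1] at km1
  have split : ∑ i ∈ range (n + 1),
      (n.choose i : ℚ) * (2 ^ (n + i) + (-2:ℚ) ^ (n + i) - 1 - (-1:ℚ) ^ (n + i))
        * _root_.bernoulli (n + i)
      = (∑ i ∈ range (n + 1), (n.choose i : ℚ) * (2:ℚ) ^ (n + i) * _root_.bernoulli (n + i))
      + (∑ i ∈ range (n + 1), (n.choose i : ℚ) * (-2:ℚ) ^ (n + i) * _root_.bernoulli (n + i))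
      - (∑ i ∈ range (n + 1), (n.choose i : ℚ) * (1:ℚ) ^ (n + i) * _root_.bernoulli (n + i))
      - (∑ i ∈ range (n + 1), (n.choose i : ℚ) * (-1:ℚ) ^ (n + i) * _root_.bernoulli (n + i)) := by
    rw [← Finset.sum_add_distrib, ← Finset.sum_sub_distrib, ← Finset.sum_sub_distrib]
    exact Finset.sum_congr rfl fun i _ => by ring
  rw [split, ← k2, ← km2, ← k1, ← km1]
  linarith

end Umbral

open Finset in
theorem seidel_identity (n : ℕ) (hn : 2 ≤ n) :
    ∑ j ∈ Finset.range (n / 2 + 1),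
      (-1 : ℚ) ^ j * (n.choose (2 * j)) * genocchi (n - j) = 0 := by
  set g : ℕ → ℚ := fun i =>
    (n.choose i : ℚ) * (2 ^ (n + i) + (-2:ℚ) ^ (n + i) - 1 - (-1:ℚ) ^ (n + i)) * _root_.bernoulli (n + i)
    with hg
  have hinj : ∀ x ∈ range (n / 2 + 1), ∀ y ∈ range (n / 2 + 1),
      n - 2 * x = n - 2 * y → x = y := by
    intro x hx y hy h
    rw [mem_range] at hx hy
    omega
  have himg : ∑ j ∈ range (n / 2 + 1), g (n - 2 * j)
      = ∑ i ∈ range (n + 1), g i := by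
    rw [← Finset.sum_image hinj]
    refine Finset.sum_subset ?_ ?_
    · intro i hi
      rw [Finset.mem_image] at hi
      obtain ⟨j, hj, rfl⟩ := hi
      rw [mem_range] at hj ⊢
      omega
    · intro i hi hni
      rw [mem_range] at hi
      rw [Finset.mem_image] at hni
      push_neg at hni
      have hodd : Odd (n + i) := by
        rcases Nat.even_or_odd (n + i) with he | ho
        · exfalso
          rw [Nat.even_iff] at he
          refine hni ((n - i) / 2) ?_ (by omega)
          rw [mem_range]; omega
        · exact ho
      rw [hg]
      simp only
      rw [hodd.neg_pow, hodd.neg_pow]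
      norm_num
  have hterm : ∀ j ∈ range (n / 2 + 1),
      g (n - 2 * j) = (-1:ℚ) ^ (n + 1) * ((-1:ℚ) ^ j * (n.choose (2 * j)) * genocchi (n - j)) := by
    intro j hj
    rw [mem_range] at hj
    have h2j : 2 * j ≤ n := by omega
    have hexp : n + (n - 2 * j) = 2 * (n - j) := by omega
    have heven : Even (2 * (n - j)) := even_two_mul _
    rw [hg]
    simp only
    rw [hexp, Nat.choose_symm h2j, genocchi]
    rw [heven.neg_pow, heven.neg_pow, one_pow]
    have h4 : (2:ℚ) ^ (2 * (n - j)) = 4 ^ (n - j) := by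
      rw [pow_mul]; norm_num
    rw [h4]
    have hsign : (-1:ℚ) ^ (n + 1) * ((-1:ℚ) ^ j * (-1:ℚ) ^ (n - j + 1)) = 1 := by
      rw [← pow_add, ← pow_add]
      have : n + 1 + (j + (n - j + 1)) = 2 * (n + 1) := by omega
      rw [this]
      exact (even_two_mul _).neg_one_pow
    calc (n.choose (2*j) : ℚ) * (4 ^ (n-j) + 4 ^ (n-j) - 1 - 1) * _root_.bernoulli (2 * (n-j))
        = ((-1:ℚ) ^ (n + 1) * ((-1:ℚ) ^ j * (-1:ℚ) ^ (n - j + 1))) *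
          ((n.choose (2*j) : ℚ) * (2 * (4 ^ (n-j) - 1)) * _root_.bernoulli (2 * (n-j))) := by
          rw [hsign]; ring
      _ = (-1:ℚ) ^ (n + 1) * ((-1:ℚ) ^ j * (n.choose (2 * j)) *
            ((-1) ^ (n - j + 1) * 2 * (4 ^ (n - j) - 1) * _root_.bernoulli (2 * (n - j)))) := by
          ring
  rw [Finset.sum_congr rfl hterm] at *
  rw [← Finset.mul_sum] at *
  have h0 : ∑ i ∈ range (n + 1), g i = 0 := sum_S_eq n hn
  rw [h0] at himg
  rcases mul_eq_zero.mp himg with h | h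
  · exact absurd h (by positivity)
  · exact h
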